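/- Let w be a nonnegative locally integrable function on ℝ and suppose there exist α₀ ∈ (0,1) and C₀ ≥ 1 such that w({x : M⁺1_E(x) > α₀}) ≤ C₀ w(E) for all measurable sets E with 0 < w(E) < ∞. Then for every λ ∈ (0,1) and every such set E, w({x : M⁺1_E(x) > λ}) ≤ C₀ · λ^{-p} · w(E), where p = log C₀ / log(1/α₀). -/

import Mathlib

open MeasureTheory Set

noncomputable def Mplus (f : ℝ → ℝ) (x : ℝ) : ℝ :=
  ⨆ h : {h : ℝ // 0 < h}, (h.1)⁻¹ * ∫ t in x..(x + h.1), |f t|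

noncomputable def Mminus (f : ℝ → ℝ) (x : ℝ) : ℝ :=
  ⨆ h : {h : ℝ // 0 < h}, (h.1)⁻¹ * ∫ t in (x - h.1)..x, |f t|

noncomputable def halo (γ : ℝ) (E : Set ℝ) : Set ℝ :=
  {x | γ < Mplus (E.indicator fun _ => (1:ℝ)) x}

noncomputable def wsize (w : ℝ → ℝ) (E : Set ℝ) : ENNReal :=
  ∫⁻ x in E, ENNReal.ofReal (w x)

noncomputable def tauber (w : ℝ → ℝ) (α : ℝ) : ENNReal :=
  ⨆ E : {E : Set ℝ // MeasurableSet E ∧ 0 < wsize w E ∧ wsize w E < ⊤},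
    wsize w (halo α E.1) / wsize w E.1


lemma integral_ind (E : Set ℝ) (hE : MeasurableSet E) (x h : ℝ) (hx : 0 ≤ h) :
    ∫ t in x..(x+h), |E.indicator (fun _ => (1:ℝ)) t| = (volume (E ∩ Ioc x (x+h))).toReal := by
  have habs : ∀ t, |E.indicator (fun _ => (1:ℝ)) t| = E.indicator (fun _ => (1:ℝ)) t :=
    fun t => abs_of_nonneg (Set.indicator_nonneg (fun _ _ => zero_le_one) t)
  simp only [habs]
  rw [intervalIntegral.integral_of_le (by linarith), MeasureTheory.setIntegral_indicator hE]
  simp [Measure.restrict_apply hE, Set.inter_comm]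
  rfl

lemma vol_inter_Ioc_lt_top (E : Set ℝ) (x y : ℝ) : volume (E ∩ Ioc x y) < ⊤ :=
  lt_of_le_of_lt (measure_mono inter_subset_right) (by simp)

lemma toReal_vol_mono {S T : Set ℝ} (hT : volume T < ⊤) (h : S ⊆ T) :
    (volume S).toReal ≤ (volume T).toReal :=
  ENNReal.toReal_mono hT.ne (measure_mono h)

lemma bdd_mplus (E : Set ℝ) (hE : MeasurableSet E) (x : ℝ) :
    BddAbove (Set.range fun h : {h : ℝ // 0 < h} =>
      (h.1)⁻¹ * ∫ t in x..(x + h.1), |E.indicator (fun _ => (1:ℝ)) t|) := by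
  refine ⟨1, ?_⟩
  rintro r ⟨⟨h, hh⟩, rfl⟩
  simp only
  rw [integral_ind E hE x h hh.le, inv_mul_le_iff₀ hh, mul_one]
  calc (volume (E ∩ Ioc x (x+h))).toReal
      ≤ (volume (Ioc x (x+h))).toReal := toReal_vol_mono (by simp) inter_subset_right
    _ ≤ h := by rw [Real.volume_Ioc]; simp [ENNReal.toReal_ofReal hh.le]

lemma mem_halo_iff (E : Set ℝ) (hE : MeasurableSet E) (γ x : ℝ) :
    x ∈ halo γ E ↔ ∃ h, 0 < h ∧ γ * h < (volume (E ∩ Ioc x (x+h))).toReal := by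
  rw [halo, mem_setOf_eq, Mplus, lt_ciSup_iff (bdd_mplus E hE x)]
  constructor
  · rintro ⟨⟨h, hh⟩, hlt⟩
    refine ⟨h, hh, ?_⟩
    rw [integral_ind E hE x h hh.le, lt_inv_mul_iff₀ hh] at hlt
    linarith [hlt]
  · rintro ⟨h, hh, hlt⟩
    refine ⟨⟨h, hh⟩, ?_⟩
    simp only
    rw [integral_ind E hE x h hh.le, lt_inv_mul_iff₀ hh]
    linarith [hlt]

lemma not_mem_halo (E : Set ℝ) (hE : MeasurableSet E) {γ x : ℝ} (hx : x ∉ halo γ E) :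
    ∀ u, 0 < u → (volume (E ∩ Ioc x (x+u))).toReal ≤ γ * u := by
  intro u hu
  by_contra hcon
  exact hx ((mem_halo_iff E hE γ x).mpr ⟨u, hu, not_le.mp hcon⟩)

lemma halo_open (E : Set ℝ) (hE : MeasurableSet E) {γ : ℝ} (hγ : 0 < γ) :
    IsOpen (halo γ E) := by
  rw [Metric.isOpen_iff]
  intro x hx
  rw [mem_halo_iff E hE] at hx
  obtain ⟨h, hh, hI⟩ := hx
  set I := (volume (E ∩ Ioc x (x+h))).toReal with hIdef
  set ε := min (h/2) ((I - γ*h)/(2*(1+γ))) with hεdef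
  have hq : 0 < (I - γ*h)/(2*(1+γ)) := by
    apply div_pos (by linarith) (by linarith)
  have hεpos : 0 < ε := lt_min (by linarith) hq
  have hε1 : ε ≤ h/2 := min_le_left _ _
  have hε2 : ε ≤ (I - γ*h)/(2*(1+γ)) := min_le_right _ _
  have hε3 : (1+γ)*ε ≤ (I - γ*h)/2 := by
    have h2g : (0:ℝ) < 2*(1+γ) := by linarith
    rw [le_div_iff₀ h2g] at hε2
    nlinarith
  refine ⟨ε, hεpos, fun y hy => ?_⟩
  rw [Metric.mem_ball, Real.dist_eq] at hy
  have h1 : x - ε < y := by cases' abs_lt.mp hy with a b; linarith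
  have h2 : y < x + ε := by cases' abs_lt.mp hy with a b; linarith
  rw [mem_halo_iff E hE]
  refine ⟨x + h - y, by linarith, ?_⟩
  have hyy : y + (x + h - y) = x + h := by ring
  rw [hyy]
  set J := (volume (E ∩ Ioc y (x+h))).toReal with hJdef
  rcases le_or_gt y x with hyx | hyx
  · have hIJ : I ≤ J := toReal_vol_mono (vol_inter_Ioc_lt_top E y (x+h))
      (inter_subset_inter_right E (Ioc_subset_Ioc_left hyx))
    have : γ * (x + h - y) ≤ γ * (h + ε) := by
      apply mul_le_mul_of_nonneg_left (by linarith) hγ.le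
    nlinarith
  · have hsub : E ∩ Ioc x (x+h) ⊆ (E ∩ Ioc y (x+h)) ∪ Ioc x y := by
      rintro t ⟨htE, ht1, ht2⟩
      by_cases hty : y < t
      · exact Or.inl ⟨htE, hty, ht2⟩
      · exact Or.inr ⟨ht1, not_lt.mp hty⟩
    have hvol : volume (E ∩ Ioc x (x+h)) ≤ volume (E ∩ Ioc y (x+h)) + ENNReal.ofReal (y - x) :=
      le_trans (measure_mono hsub) (le_trans (measure_union_le _ _) (by rw [Real.volume_Ioc]))
    have hIJ : I ≤ J + (y - x) := by
      have hfin2 := vol_inter_Ioc_lt_top E y (x+h)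
      have := ENNReal.toReal_mono
        (a := volume (E ∩ Ioc x (x+h)))
        (by simp [hfin2.ne, ENNReal.add_ne_top] : volume (E ∩ Ioc y (x+h)) + ENNReal.ofReal (y-x) ≠ ⊤)
        hvol
      rw [ENNReal.toReal_add hfin2.ne (by simp), ENNReal.toReal_ofReal (by linarith)] at this
      exact this
    have hJI : I - ε ≤ J := by nlinarith
    have : γ * (x + h - y) ≤ γ * h := mul_le_mul_of_nonneg_left (by linarith) hγ.le
    nlinarith
lemma null_diff_halo (E : Set ℝ) (hE : MeasurableSet E) {β : ℝ} (hβ : β ∈ Ioo (0:ℝ) 1) :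
    volume (E \ halo β E) = 0 := by
  set N := E \ halo β E with hN
  have hNmeas : MeasurableSet N := hE.diff (halo_open E hE hβ.1).measurableSet
  by_contra hvol
  have hne0 : volume.restrict N ≠ 0 := by
    intro hc
    exact hvol (by rw [← Measure.restrict_apply_univ, hc]; simp)
  have : (ae (volume.restrict N)).NeBot := MeasureTheory.ae_neBot.mpr hne0
  have hdens := Besicovitch.ae_tendsto_measure_inter_div (volume : Measure ℝ) N
  have hNae : ∀ᵐ t ∂(volume.restrict N), t ∈ N :=
    (ae_restrict_iff' hNmeas).mpr (Filter.Eventually.of_forall (fun t ht => ht))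
  obtain ⟨t, htend, htN⟩ := (hdens.and hNae).exists
  -- bound the ratio
  set c : ENNReal := ENNReal.ofReal ((1+β)/2) with hc
  have hbound : ∀ r ∈ Ioi (0:ℝ),
      volume (N ∩ Metric.closedBall t r) / volume (Metric.closedBall t r) ≤ c := by
    intro r hr
    rw [mem_Ioi] at hr
    have hcb : Metric.closedBall t r = Icc (t-r) (t+r) := Real.closedBall_eq_Icc
    have hsplit : N ∩ Metric.closedBall t r ⊆ (Icc (t-r) t) ∪ (E ∩ Ioc t (t+r)) := by
      rintro s ⟨hsN, hscb⟩
      rw [hcb, mem_Icc] at hscb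
      rcases le_or_gt s t with hst | hst
      · exact Or.inl ⟨hscb.1, hst⟩
      · exact Or.inr ⟨hsN.1, hst, hscb.2⟩
    have hnum : volume (N ∩ Metric.closedBall t r) ≤ ENNReal.ofReal r + ENNReal.ofReal (β*r) := by
      refine le_trans (measure_mono hsplit) (le_trans (measure_union_le _ _) ?_)
      gcongr
      · rw [Real.volume_Icc]
        apply ENNReal.ofReal_le_ofReal; linarith
      · have htail := not_mem_halo E hE (fun hmem => htN.2 hmem) r hr
        exact (ENNReal.le_ofReal_iff_toReal_le (vol_inter_Ioc_lt_top E t (t+r)).ne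
          (mul_nonneg hβ.1.le hr.le)).mpr htail
    have hden : volume (Metric.closedBall t r) = ENNReal.ofReal (2*r) := by
      rw [Real.volume_closedBall]
    calc volume (N ∩ Metric.closedBall t r) / volume (Metric.closedBall t r)
        ≤ (ENNReal.ofReal r + ENNReal.ofReal (β*r)) / ENNReal.ofReal (2*r) := by
          rw [hden]; exact ENNReal.div_le_div_right hnum _
      _ = ENNReal.ofReal (r + β*r) / ENNReal.ofReal (2*r) := by
          rw [← ENNReal.ofReal_add hr.le (mul_nonneg hβ.1.le hr.le)]
      _ = ENNReal.ofReal ((r + β*r)/(2*r)) := by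
          rw [ENNReal.ofReal_div_of_pos (by linarith)]
      _ = c := by
          rw [hc]
          congr 1
          field_simp
  have hle : (1:ENNReal) ≤ c := by
    refine le_of_tendsto htend ?_
    filter_upwards [self_mem_nhdsWithin] with r hr
    exact hbound r hr
  have : c < 1 := by
    rw [hc]
    exact ENNReal.ofReal_lt_one.mpr (by linarith [hβ.2])
  exact absurd hle (not_le.mpr this)
lemma halo_comp (E : Set ℝ) (hE : MeasurableSet E) {a b : ℝ}
    (ha : a ∈ Ioo (0:ℝ) 1) (hb : b ∈ Ioo (0:ℝ) 1) :
    halo (a * b) E ⊆ halo a (halo b E) := by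
  intro x hx
  set F := halo b E with hFdef
  have hFopen : IsOpen F := halo_open E hE hb.1
  have hFmeas : MeasurableSet F := hFopen.measurableSet
  rw [mem_halo_iff E hE] at hx
  obtain ⟨h, hh, hI⟩ := hx
  rw [mem_halo_iff (halo b E) hFmeas]
  by_cases hcase : ∃ c, x < c ∧ Ioo x c ⊆ F
  · -- Case A : an initial interval is inside F
    obtain ⟨c, hxc, hsub⟩ := hcase
    refine ⟨c - x, by linarith, ?_⟩
    have hxc' : x + (c - x) = c := by ring
    rw [hxc']
    have hIoo : Ioo x c ⊆ F ∩ Ioc x c := fun t ht => ⟨hsub ht, ht.1, ht.2.le⟩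
    have : (volume (Ioo x c)).toReal ≤ (volume (F ∩ Ioc x c)).toReal :=
      toReal_vol_mono (vol_inter_Ioc_lt_top F x c) hIoo
    rw [Real.volume_Ioo, ENNReal.toReal_ofReal (by linarith)] at this
    nlinarith [ha.2, sub_pos.mpr hxc]
  · -- Case B
    push_neg at hcase
    refine ⟨h, hh, ?_⟩
    set V := F ∩ Ioo x (x+h) with hVdef
    have hVopen : IsOpen V := hFopen.inter isOpen_Ioo
    -- per-component estimate packaged
    have hcompbound : ∀ q : ℝ, q ∈ V →
        volume (E ∩ connectedComponentIn V q) ≤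
          ENNReal.ofReal b * volume (connectedComponentIn V q) := by
      intro q hq
      set C := connectedComponentIn V q with hC
      have hqC : q ∈ C := mem_connectedComponentIn hq
      have hCopen : IsOpen C := hVopen.connectedComponentIn
      have hCV : C ⊆ V := connectedComponentIn_subset V q
      have hCsub : C ⊆ Ioo x (x+h) := fun t ht => (hCV ht).2
      have hbdd : BddBelow C := BddBelow.mono hCsub bddBelow_Ioo
      have hbdd2 : BddAbove C := BddAbove.mono hCsub bddAbove_Ioo
      have hCne : C.Nonempty := ⟨q, hqC⟩
      set A := sInf C with hA
      set B := sSup C with hB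
      -- A < B
      obtain ⟨ε, hε, hball⟩ := Metric.isOpen_iff.mp hCopen q hqC
      have hq2 : q + ε/2 ∈ C := hball (by
        rw [Metric.mem_ball, Real.dist_eq]
        rw [show q + ε/2 - q = ε/2 by ring, abs_of_nonneg (by linarith)]
        linarith)
      have hAq : A ≤ q := csInf_le hbdd hqC
      have hAB : A < B := lt_of_le_of_lt hAq (lt_of_lt_of_le (by linarith) (le_csSup hbdd2 hq2))
      -- interval structure
      have hIooAB : Ioo A B ⊆ C := by
        intro u hu
        obtain ⟨y, hyC, hyu⟩ := exists_lt_of_csInf_lt hCne hu.1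
        obtain ⟨z, hzC, huz⟩ := exists_lt_of_lt_csSup hCne hu.2
        exact (isPreconnected_connectedComponentIn.ordConnected).out hyC hzC
          ⟨hyu.le, huz.le⟩
      have hCIcc : C ⊆ Icc A B := fun t ht => ⟨csInf_le hbdd ht, le_csSup hbdd2 ht⟩
      have hvolC : volume C = ENNReal.ofReal (B - A) := by
        apply le_antisymm
        · calc volume C ≤ volume (Icc A B) := measure_mono hCIcc
            _ = ENNReal.ofReal (B - A) := Real.volume_Icc
        · calc ENNReal.ofReal (B - A) = volume (Ioo A B) := Real.volume_Ioo.symm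
            _ ≤ volume C := measure_mono hIooAB
      -- A not in C
      have hAnotC : A ∉ C := by
        intro hAC
        obtain ⟨δ, hδ, hballA⟩ := Metric.isOpen_iff.mp hCopen A hAC
        have : A - δ/2 ∈ C := hballA (by
          rw [Metric.mem_ball, Real.dist_eq]
          rw [show A - δ/2 - A = -(δ/2) by ring, abs_neg, abs_of_nonneg (by linarith)]
          linarith)
        have := csInf_le hbdd this
        linarith
      -- A not in V
      have hAnotV : A ∉ V := by
        intro hAV
        set C' := connectedComponentIn V A with hC'
        have hAC' : A ∈ C' := mem_connectedComponentIn hAV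
        have hC'open : IsOpen C' := hVopen.connectedComponentIn
        obtain ⟨δ, hδ, hballA⟩ := Metric.isOpen_iff.mp hC'open A hAC'
        set u := min B (A + δ) with hu
        have huAB : A < (A + min (B - A) δ / 2) := by
          have : 0 < min (B - A) δ := lt_min (by linarith) hδ
          linarith
        set v := A + min (B - A) δ / 2 with hv
        have hvC : v ∈ C := hIooAB ⟨huAB, by
          have h1 : min (B - A) δ ≤ B - A := min_le_left _ _
          have : 0 < min (B - A) δ := lt_min (by linarith) hδ
          rw [hv]; linarith⟩
        have hvC' : v ∈ C' := hballA (by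
          rw [Metric.mem_ball, Real.dist_eq, hv]
          have h2 : min (B - A) δ ≤ δ := min_le_right _ _
          have : 0 < min (B - A) δ := lt_min (by linarith) hδ
          rw [abs_of_nonneg (by linarith)]
          linarith)
        have : C' = C := by
          rw [hC', hC]
          rw [connectedComponentIn_eq hvC', connectedComponentIn_eq hvC]
        exact hAnotC (this ▸ hAC')
      -- x < A
      have hxA : x ≤ A := le_csInf hCne (fun t ht => (hCsub ht).1.le)
      have hxAlt : x < A := by
        rcases eq_or_lt_of_le hxA with heq | hlt
        · exact absurd (fun z hz => (hCV (hIooAB (heq ▸ hz))).1) (hcase B (heq ▸ hAB))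
        · exact hlt
      have hAxh : A < x + h := lt_of_lt_of_le hAB
        (csSup_le hCne (fun t ht => (hCsub ht).2.le))
      -- A not in F
      have hAnotF : A ∉ F := fun hAF => hAnotV ⟨hAF, hxAlt, hAxh⟩
      -- tail estimate
      have htail := not_mem_halo E hE hAnotF (B - A) (by linarith)
      have hAB' : A + (B - A) = B := by ring
      rw [hAB'] at htail
      have hIocbound : volume (E ∩ Ioc A B) ≤ ENNReal.ofReal (b * (B - A)) :=
        (ENNReal.le_ofReal_iff_toReal_le (vol_inter_Ioc_lt_top E A B).ne
          (mul_nonneg hb.1.le (by linarith))).mpr htail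
      calc volume (E ∩ C) ≤ volume (E ∩ Ioc A B) := by
            refine measure_mono (fun t ht => ⟨ht.1, ?_⟩)
            have := hCIcc ht.2
            have htA : A ≠ t := fun heq => hAnotC (heq ▸ ht.2)
            exact ⟨lt_of_le_of_ne this.1 htA, this.2⟩
        _ ≤ ENNReal.ofReal (b * (B - A)) := hIocbound
        _ = ENNReal.ofReal b * ENNReal.ofReal (B - A) :=
            ENNReal.ofReal_mul hb.1.le
        _ = ENNReal.ofReal b * volume C := by rw [hvolC]
    -- countable family of components
    set comps : Set (Set ℝ) :=
      (fun q : ℚ => connectedComponentIn V (q:ℝ)) '' {q : ℚ | (q:ℝ) ∈ V} with hcomps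
    have hcount : comps.Countable := (Set.to_countable _).image _
    have hcover : V = ⋃₀ comps := by
      apply Subset.antisymm
      · intro t ht
        have htC : t ∈ connectedComponentIn V t := mem_connectedComponentIn ht
        have hCopen : IsOpen (connectedComponentIn V t) := hVopen.connectedComponentIn
        obtain ⟨q, hq⟩ := (Rat.denseRange_cast (𝕜 := ℝ)).exists_mem_open hCopen ⟨t, htC⟩
        refine ⟨connectedComponentIn V (q:ℝ), ⟨q, connectedComponentIn_subset V t hq, rfl⟩, ?_⟩
        rw [← connectedComponentIn_eq hq]
        exact htC
      · intro t ht
        obtain ⟨C, ⟨q, hq, rfl⟩, htC⟩ := ht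
        exact connectedComponentIn_subset V _ htC
    have hdisj : comps.PairwiseDisjoint id := by
      rintro C1 ⟨q1, hq1, rfl⟩ C2 ⟨q2, hq2, rfl⟩ hne
      simp only [Function.onFun, id]
      rw [Set.disjoint_left]
      intro t ht1 ht2
      exact hne ((connectedComponentIn_eq ht1).trans (connectedComponentIn_eq ht2).symm)
    have hmeasC : ∀ C ∈ comps, MeasurableSet C := by
      rintro C ⟨q, hq, rfl⟩
      exact (hVopen.connectedComponentIn).measurableSet
    have hVsum : volume V = ∑' C : comps, volume (C : Set ℝ) := by
      rw [hcover, sUnion_eq_biUnion]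
      exact measure_biUnion hcount hdisj hmeasC
    have hEV : volume (E ∩ V) ≤ ENNReal.ofReal b * volume V := by
      have hsub2 : E ∩ V ⊆ ⋃ C ∈ comps, (E ∩ C) := by
        intro t ht
        obtain ⟨C, hC1, hC2⟩ := (hcover ▸ ht.2 : t ∈ ⋃₀ comps)
        exact mem_biUnion hC1 ⟨ht.1, hC2⟩
      calc volume (E ∩ V) ≤ ∑' C : comps, volume (E ∩ (C : Set ℝ)) :=
            le_trans (measure_mono hsub2) (measure_biUnion_le volume hcount _)
        _ ≤ ∑' C : comps, ENNReal.ofReal b * volume (C : Set ℝ) := by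
            refine ENNReal.tsum_le_tsum (fun C => ?_)
            obtain ⟨C, q, hq, rfl⟩ := C
            exact hcompbound (q : ℝ) hq
        _ = ENNReal.ofReal b * ∑' C : comps, volume (C : Set ℝ) := ENNReal.tsum_mul_left
        _ = ENNReal.ofReal b * volume V := by rw [hVsum]
    -- conclude case B
    have hIocIoo : volume (E ∩ Ioc x (x+h)) ≤ volume (E ∩ V) := by
      have hsub3 : E ∩ Ioc x (x+h) ⊆ (E ∩ V) ∪ ((E \ F) ∪ {x+h}) := by
        rintro t ⟨htE, ht1, ht2⟩
        rcases eq_or_lt_of_le ht2 with heq | hlt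
        · exact Or.inr (Or.inr (by simp [heq]))
        · by_cases htF : t ∈ F
          · exact Or.inl ⟨htE, htF, ht1, hlt⟩
          · exact Or.inr (Or.inl ⟨htE, htF⟩)
      calc volume (E ∩ Ioc x (x+h)) ≤ volume (E ∩ V) + volume ((E \ F) ∪ {x+h}) :=
            le_trans (measure_mono hsub3) (measure_union_le _ _)
        _ ≤ volume (E ∩ V) + (volume (E \ F) + volume ({x+h} : Set ℝ)) := by
            gcongr
            exact measure_union_le _ _
        _ = volume (E ∩ V) := by
            rw [null_diff_halo E hE hb, Real.volume_singleton]
            simp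
    have hVfin : volume V < ⊤ :=
      lt_of_le_of_lt (measure_mono inter_subset_right) (by simp)
    have hchain : volume (E ∩ Ioc x (x+h)) ≤ ENNReal.ofReal b * volume V :=
      le_trans hIocIoo hEV
    have htR : (volume (E ∩ Ioc x (x+h))).toReal ≤ b * (volume V).toReal := by
      have hne : ENNReal.ofReal b * volume V ≠ ⊤ :=
        ENNReal.mul_ne_top ENNReal.ofReal_ne_top hVfin.ne
      have := ENNReal.toReal_mono hne hchain
      rwa [ENNReal.toReal_mul, ENNReal.toReal_ofReal hb.1.le] at this
    have hah : a * h < (volume V).toReal := by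
      have : a * b * h < b * (volume V).toReal := lt_of_lt_of_le hI htR
      nlinarith [hb.1]
    have hfinal : (volume V).toReal ≤ (volume (F ∩ Ioc x (x+h))).toReal :=
      toReal_vol_mono (vol_inter_Ioc_lt_top F x (x+h))
        (inter_subset_inter_right F Ioo_subset_Ioc_self)
    linarith
lemma wsize_mono (w : ℝ → ℝ) {E F : Set ℝ} (h : E ⊆ F) : wsize w E ≤ wsize w F :=
  lintegral_mono_set h

lemma wsize_null (w : ℝ → ℝ) {E : Set ℝ} (h : volume E = 0) : wsize w E = 0 := by
  rw [wsize, setLIntegral_measure_zero _ _ h]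

lemma halo_anti (E : Set ℝ) {γ γ' : ℝ} (h : γ' ≤ γ) : halo γ E ⊆ halo γ' E := by
  intro t ht
  simp only [halo, mem_setOf_eq] at ht ⊢
  exact lt_of_le_of_lt h ht

theorem stmt8 (w : ℝ → ℝ) (hw : ∀ x, 0 ≤ w x) (hloc : LocallyIntegrable w volume)
    (α₀ C₀ : ℝ) (hα₀ : α₀ ∈ Ioo (0:ℝ) 1) (hC₀ : 1 ≤ C₀)
    (h : ∀ E : Set ℝ, MeasurableSet E → 0 < wsize w E → wsize w E < ⊤ →
      wsize w (halo α₀ E) ≤ ENNReal.ofReal C₀ * wsize w E) :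
    ∀ lam : ℝ, lam ∈ Ioo (0:ℝ) 1 → ∀ E : Set ℝ, MeasurableSet E →
      0 < wsize w E → wsize w E < ⊤ →
      wsize w (halo lam E)
        ≤ ENNReal.ofReal (C₀ * lam ^ (-(Real.log C₀ / Real.log (1 / α₀)))) * wsize w E := by
  intro lam hlam E hE hpos hfin
  have hC₀pos : (0:ℝ) < C₀ := lt_of_lt_of_le one_pos hC₀
  -- iteration
  have hiter : ∀ n : ℕ, wsize w (halo (α₀^(n+1)) E) ≤ (ENNReal.ofReal C₀)^(n+1) * wsize w E := by
    intro n
    induction n with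
    | zero => simpa [pow_one] using h E hE hpos hfin
    | succ n ih =>
      set E' := halo (α₀^(n+1)) E with hE'def
      have hβ : α₀^(n+1) ∈ Ioo (0:ℝ) 1 :=
        ⟨pow_pos hα₀.1 _, pow_lt_one₀ hα₀.1.le hα₀.2 (Nat.succ_ne_zero n)⟩
      have hE'meas : MeasurableSet E' := (halo_open E hE hβ.1).measurableSet
      have hE'pos : 0 < wsize w E' := by
        have h1 : wsize w E ≤ wsize w (E ∩ E') + wsize w (E \ E') := by
          rw [wsize]
          calc ∫⁻ x in E, ENNReal.ofReal (w x)
              ≤ ∫⁻ x in (E ∩ E') ∪ (E \ E'), ENNReal.ofReal (w x) :=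
                lintegral_mono_set (fun t ht => by
                  by_cases h' : t ∈ E'
                  · exact Or.inl ⟨ht, h'⟩
                  · exact Or.inr ⟨ht, h'⟩)
            _ ≤ _ := lintegral_union_le _ _ _
        rw [wsize_null w (null_diff_halo E hE hβ), add_zero] at h1
        exact lt_of_lt_of_le hpos (le_trans h1 (wsize_mono w inter_subset_right))
      have hE'fin : wsize w E' < ⊤ := by
        refine lt_of_le_of_lt (ih) ?_
        exact ENNReal.mul_lt_top (ENNReal.pow_lt_top ENNReal.ofReal_lt_top) hfin
      have happ := h E' hE'meas hE'pos hE'fin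
      have hsubset : halo (α₀^(n+2)) E ⊆ halo α₀ E' := by
        have : α₀^(n+2) = α₀ * α₀^(n+1) := by ring
        rw [this]
        exact halo_comp E hE hα₀ hβ
      calc wsize w (halo (α₀^(n+2)) E) ≤ wsize w (halo α₀ E') := wsize_mono w hsubset
        _ ≤ ENNReal.ofReal C₀ * wsize w E' := happ
        _ ≤ ENNReal.ofReal C₀ * ((ENNReal.ofReal C₀)^(n+1) * wsize w E) := by gcongr
        _ = (ENNReal.ofReal C₀)^(n+2) * wsize w E := by ring
  -- choose n
  have hex : ∃ n : ℕ, α₀^(n+1) < lam := by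
    obtain ⟨k, hk⟩ := exists_pow_lt_of_lt_one hlam.1 hα₀.2
    exact ⟨k, lt_of_le_of_lt (pow_le_pow_of_le_one hα₀.1.le hα₀.2.le (Nat.le_succ k)) hk⟩
  set n := Nat.find hex with hn
  have hlt : α₀^(n+1) < lam := Nat.find_spec hex
  have hge : lam ≤ α₀^n := by
    rcases Nat.eq_zero_or_pos n with h0 | hpos'
    · rw [h0, pow_zero]; exact hlam.2.le
    · have := Nat.find_min hex (m := n - 1) (Nat.sub_lt hpos' one_pos)
      rw [show n - 1 + 1 = n from Nat.sub_add_cancel hpos'] at this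
      exact not_lt.mp this
  -- constant comparison
  set p := Real.log C₀ / Real.log (1 / α₀) with hp
  have hlog : Real.log (1/α₀) > 0 := by
    rw [one_div, Real.log_inv]
    have := Real.log_neg hα₀.1 hα₀.2
    linarith
  have hα₀p : α₀ ^ (-p) = C₀ := by
    rw [Real.rpow_def_of_pos hα₀.1]
    have h1 : Real.log α₀ * (-p) = p * Real.log (1/α₀) := by
      rw [one_div, Real.log_inv]; ring
    rw [h1, hp, div_mul_cancel₀ _ hlog.ne']
    exact Real.exp_log hC₀pos
  have hkey : C₀^n ≤ lam ^ (-p) := by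
    have h1 : (α₀^n : ℝ) ^ (-p : ℝ) ≤ lam ^ (-p) := by
      apply Real.rpow_le_rpow_of_nonpos hlam.1 hge
      have hplog : 0 ≤ p := div_nonneg (Real.log_nonneg hC₀) hlog.le
      linarith
    calc (C₀:ℝ)^n = (α₀ ^ (-p))^n := by rw [hα₀p]
      _ = (α₀^n) ^ (-p : ℝ) := by
          rw [← Real.rpow_natCast (α₀ ^ (-p)) n, ← Real.rpow_natCast α₀ n,
            ← Real.rpow_mul hα₀.1.le, ← Real.rpow_mul hα₀.1.le, mul_comm]
      _ ≤ lam ^ (-p) := h1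
  -- final chain
  have hsub : halo lam E ⊆ halo (α₀^(n+1)) E := halo_anti E hlt.le
  calc wsize w (halo lam E) ≤ wsize w (halo (α₀^(n+1)) E) := wsize_mono w hsub
    _ ≤ (ENNReal.ofReal C₀)^(n+1) * wsize w E := hiter n
    _ ≤ ENNReal.ofReal (C₀ * lam ^ (-p)) * wsize w E := by
        gcongr
        rw [← ENNReal.ofReal_pow hC₀pos.le]
        apply ENNReal.ofReal_le_ofReal
        calc C₀^(n+1) = C₀ * C₀^n := by ring
          _ ≤ C₀ * lam ^ (-p) := by nlinarith [pow_pos hC₀pos n]
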